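/- Let 𝒢 = (S,E) be a finite simple graph and let λ ≠ μ be two distinct coherent components of 𝒢. If there exist α ∈ λ and β ∈ μ with αβ ∈ E, then γδ ∈ E for all γ ∈ λ and all δ ∈ μ. -/

import Mathlib

/-- `α ≺ β ↔ Ω'(α) ⊆ Ω(β)`, where `Ω'` is the open and `Ω` the closed neighborhood. -/
def GraphPrec {S : Type*} (G : SimpleGraph S) (α β : S) : Prop :=
  G.neighborSet α ⊆ insert β (G.neighborSet β)

/-- `α ∼ β ↔ α ≺ β ∧ β ≺ α`. -/
def GraphSim {S : Type*} (G : SimpleGraph S) (α β : S) : Prop :=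
  GraphPrec G α β ∧ GraphPrec G β α

/-- A coherent component of `𝒢` is an equivalence class of the relation `∼`. -/
def IsCoherentComponent {S : Type*} (G : SimpleGraph S) (l : Set S) : Prop :=
  ∃ α : S, l = {β | GraphSim G α β}

lemma graphSim_refl {S : Type*} (G : SimpleGraph S) (a : S) : GraphSim G a a :=
  ⟨fun _ hx => Set.mem_insert_of_mem _ hx, fun _ hx => Set.mem_insert_of_mem _ hx⟩

lemma graphSim_symm {S : Type*} {G : SimpleGraph S} {a b : S}
    (h : GraphSim G a b) : GraphSim G b a := ⟨h.2, h.1⟩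

lemma graphPrec_trans {S : Type*} {G : SimpleGraph S} {a b c : S}
    (hab : GraphSim G a b) (hbc : GraphSim G b c) : GraphPrec G a c := by
  intro x hx
  rcases hab.1 hx with hxb | hxb
  · -- x = b
    subst hxb
    have hba : x ∈ G.neighborSet x → False := fun h => G.irrefl h
    have hax : a ∈ G.neighborSet x := G.adj_symm hx
    rcases hbc.1 hax with hac | hac
    · -- a = c
      subst hac
      exact Set.mem_insert_of_mem _ hx
    · -- a adj c
      have hca : c ∈ G.neighborSet a := G.adj_symm hac
      rcases hab.1 hca with hcb | hcb
      · exact hcb ▸ Set.mem_insert _ _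
      · exact Set.mem_insert_of_mem _ (G.adj_symm hcb)
  · exact hbc.1 hxb

lemma graphSim_trans {S : Type*} {G : SimpleGraph S} {a b c : S}
    (hab : GraphSim G a b) (hbc : GraphSim G b c) : GraphSim G a c :=
  ⟨graphPrec_trans hab hbc, graphPrec_trans (graphSim_symm hbc) (graphSim_symm hab)⟩

/-- Let `𝒢 = (S, E)` be a finite simple graph and `λ ≠ μ` two distinct
coherent components of `𝒢`.  If some `α ∈ λ` and `β ∈ μ` are adjacent, then every
`γ ∈ λ` is adjacent to every `δ ∈ μ`. -/
theorem coherentComponents_adjacent {S : Type*} [Fintype S] (G : SimpleGraph S)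
    (l m : Set S) (hl : IsCoherentComponent G l) (hm : IsCoherentComponent G m)
    (hne : l ≠ m) (α : S) (hα : α ∈ l) (β : S) (hβ : β ∈ m) (hαβ : G.Adj α β) :
    ∀ γ ∈ l, ∀ δ ∈ m, G.Adj γ δ := by
  obtain ⟨a, rfl⟩ := hl
  obtain ⟨b, rfl⟩ := hm
  intro γ hγ δ hδ
  -- hα : GraphSim a α, hγ : GraphSim a γ, hβ : GraphSim b β, hδ : GraphSim b δ
  have key : ∀ x, GraphSim G a x → GraphSim G b x → False := by
    intro x hax hbx
    exact hne (by
      ext y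
      constructor
      · intro hy; exact graphSim_trans (graphSim_trans hbx (graphSim_symm hax)) hy
      · intro hy; exact graphSim_trans (graphSim_trans hax (graphSim_symm hbx)) hy)
  have hαγ : GraphSim G α γ := graphSim_trans (graphSim_symm hα) hγ
  have hβδ : GraphSim G β δ := graphSim_trans (graphSim_symm hβ) hδ
  have hβN : β ∈ G.neighborSet α := hαβ
  rcases hαγ.1 hβN with h1 | h1
  · -- β = γ : γ in both components, contradiction
    exact absurd (key γ hγ (h1 ▸ hβ)) (fun h => h)
  · -- γ adj β
    have hγN : γ ∈ G.neighborSet β := G.adj_symm h1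
    rcases hβδ.1 hγN with h2 | h2
    · exact absurd (key γ hγ (h2 ▸ hδ)) (fun h => h)
    · exact G.adj_symm h2
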